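/- Let X₁,...,X_T be real random variables adapted to a filtration with X_t ≤ R and E[X_t | X_1,...,X_{t-1}] = 0 for all t. Let S = Σ_{t=1}^T X_t and V = Σ_{t=1}^T E[X_t² | X_1,...,X_{t-1}]. Then for any δ > 0 and any fixed V' ≥ R² ln(1/δ)/(e-2), with probability at least 1-δ, S ≤ √((e-2) ln(1/δ)) · (V/√V' + √V'). -/

import Mathlib

open MeasureTheory

lemma exp_tsum (x : ℝ) : Real.exp x = ∑' n : ℕ, x ^ n / n.factorial := by
  rw [Real.exp_eq_exp_ℝ, NormedSpace.exp_eq_tsum_div]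

lemma exp_shift2 (x : ℝ) :
    Real.exp x = 1 + x + ∑' n : ℕ, x ^ (n + 2) / (n + 2).factorial := by
  have hs := Real.summable_pow_div_factorial x
  have h1 : Summable (fun n : ℕ => x ^ (n + 1) / (n + 1).factorial) :=
    (summable_nat_add_iff (f := fun n : ℕ => x ^ n / n.factorial) 1).2 hs
  rw [exp_tsum, Summable.tsum_eq_zero_add hs, Summable.tsum_eq_zero_add h1]
  simp [Nat.factorial]
  ring

lemma exp_quad {x : ℝ} (hx : x ≤ 1) :
    Real.exp x ≤ 1 + x + (Real.exp 1 - 2) * x ^ 2 := by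
  rcases le_or_gt x 0 with h0 | h0
  · have hy : 0 ≤ -x := by linarith
    have h1 : ∑ i ∈ Finset.range 4, (-x) ^ i / i.factorial ≤ Real.exp (-x) :=
      Real.sum_le_exp_of_nonneg hy 4
    have h2 : Real.exp (-x) = (Real.exp x)⁻¹ := Real.exp_neg x
    have h3 : (0:ℝ) < Real.exp x := Real.exp_pos x
    have h4 : Real.exp x ≤ 1 + x + x ^ 2 / 2 := by
      rw [h2] at h1
      simp [Finset.sum_range_succ, Nat.factorial] at h1
      rw [inv_eq_one_div, le_div_iff₀ h3] at h1
      have hP : (0:ℝ) < 1 - x + x ^ 2 / 2 - x ^ 3 / 6 := by nlinarith [sq_nonneg x]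
      have hpoly : (1:ℝ) ≤ (1 - x + x ^ 2 / 2 - x ^ 3 / 6) * (1 + x + x ^ 2 / 2) := by
        nlinarith [pow_nonneg hy 3, pow_nonneg hy 4, pow_nonneg hy 5]
      have h1' : (1 - x + x ^ 2 / 2 - x ^ 3 / 6) * Real.exp x ≤ 1 := by nlinarith
      calc Real.exp x = ((1 - x + x ^ 2 / 2 - x ^ 3 / 6) * Real.exp x) /
              (1 - x + x ^ 2 / 2 - x ^ 3 / 6) := by
            rw [mul_comm, mul_div_assoc, div_self hP.ne', mul_one]
        _ ≤ ((1 - x + x ^ 2 / 2 - x ^ 3 / 6) * (1 + x + x ^ 2 / 2)) /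
              (1 - x + x ^ 2 / 2 - x ^ 3 / 6) := by
            gcongr
            nlinarith [Real.exp_pos x]
        _ = 1 + x + x ^ 2 / 2 := by
            rw [mul_comm, mul_div_assoc, div_self hP.ne', mul_one]
    have h5 : (2.7182818283:ℝ) < Real.exp 1 := Real.exp_one_gt_d9
    have h6 : (1:ℝ)/2 ≤ Real.exp 1 - 2 := by nlinarith
    nlinarith [mul_le_mul_of_nonneg_right h6 (sq_nonneg x)]
  · have he : (Real.exp 1 - 2) = ∑' n : ℕ, (1:ℝ) ^ (n + 2) / (n + 2).factorial := by
      have := exp_shift2 1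
      linarith
    have hsum1 : Summable (fun n : ℕ => x ^ (n + 2) / (n + 2).factorial) :=
      (summable_nat_add_iff (f := fun n : ℕ => x ^ n / n.factorial) 2).2 (Real.summable_pow_div_factorial x)
    have hsum2 : Summable (fun n : ℕ => (1:ℝ) ^ (n + 2) / (n + 2).factorial) :=
      (summable_nat_add_iff (f := fun n : ℕ => (1:ℝ) ^ n / n.factorial) 2).2 (Real.summable_pow_div_factorial 1)
    have hbound : ∑' n : ℕ, x ^ (n + 2) / (n + 2).factorial ≤
        (Real.exp 1 - 2) * x ^ 2 := by
      have hle : ∑' n : ℕ, x ^ (n + 2) / (n + 2).factorial ≤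
          ∑' n : ℕ, x ^ 2 * ((1:ℝ) ^ (n + 2) / (n + 2).factorial) := by
        refine Summable.tsum_le_tsum (fun n => ?_) hsum1 (hsum2.mul_left _)
        have hxn : x ^ (n + 2) ≤ x ^ 2 := by
          calc x ^ (n + 2) = x ^ 2 * x ^ n := by ring
            _ ≤ x ^ 2 * 1 := by
                have := pow_le_one₀ h0.le hx (n := n)
                nlinarith [sq_nonneg x]
            _ = x ^ 2 := by ring
        have hfac : (0:ℝ) < (n + 2).factorial := by positivity
        rw [one_pow]
        calc x ^ (n + 2) / ((n + 2).factorial : ℝ) ≤ x ^ 2 / ((n + 2).factorial : ℝ) := by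
              gcongr
          _ = x ^ 2 * (1 / ((n + 2).factorial : ℝ)) := by ring
      rw [tsum_mul_left] at hle
      rw [he]
      calc ∑' n : ℕ, x ^ (n + 2) / (n + 2).factorial
          ≤ x ^ 2 * ∑' n : ℕ, (1:ℝ) ^ (n + 2) / (n + 2).factorial := hle
        _ = (∑' n : ℕ, (1:ℝ) ^ (n + 2) / (n + 2).factorial) * x ^ 2 := by ring
    rw [exp_shift2 x]
    linarith

lemma integral_exp_le
    {Ω : Type*} {m0 : MeasurableSpace Ω} {μ : Measure Ω} [IsProbabilityMeasure μ]
    (ℱ : Filtration ℕ m0) (T : ℕ) (X : ℕ → Ω → ℝ) (R c l : ℝ)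
    (hc : 0 < c) (hl : 0 < l)
    (hadapt : ∀ t, StronglyMeasurable[ℱ t] (X t))
    (hbdd : ∀ t ω, X t ω ≤ R)
    (hint : ∀ t, Integrable (X t) μ)
    (hint2 : ∀ t, Integrable (fun ω => X t ω ^ 2) μ)
    (hmds : ∀ t, 1 ≤ t → t ≤ T → μ[X t|ℱ (t - 1)] =ᵐ[μ] 0)
    (hquad : ∀ x : ℝ, x ≤ 1 → Real.exp x ≤ 1 + x + c * x ^ 2)
    (hlR : ∀ t ω, l * X t ω ≤ 1) :
    ∀ n, n ≤ T → Integrable (fun ω => Real.exp (l * ∑ t ∈ Finset.Icc 1 n, X t ω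
        - c * l ^ 2 * ∑ t ∈ Finset.Icc 1 n, (μ[fun ω' => X t ω' ^ 2|ℱ (t - 1)]) ω)) μ ∧
      ∫ ω, Real.exp (l * ∑ t ∈ Finset.Icc 1 n, X t ω
        - c * l ^ 2 * ∑ t ∈ Finset.Icc 1 n, (μ[fun ω' => X t ω' ^ 2|ℱ (t - 1)]) ω) ∂μ ≤ 1 := by
  -- abbreviations
  set σ : ℕ → Ω → ℝ := fun t => μ[fun ω' => X t ω' ^ 2|ℱ (t - 1)] with hσdef
  set S : ℕ → Ω → ℝ := fun n ω => ∑ t ∈ Finset.Icc 1 n, X t ω with hSdef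
  set V : ℕ → Ω → ℝ := fun n ω => ∑ t ∈ Finset.Icc 1 n, σ t ω with hVdef
  set M : ℕ → Ω → ℝ := fun n ω => Real.exp (l * S n ω - c * l ^ 2 * V n ω) with hMdef
  have hσnn : ∀ t, 0 ≤ᵐ[μ] σ t := fun t =>
    condExp_nonneg (ae_of_all _ fun ω => sq_nonneg _)
  have hVnn : ∀ n, ∀ᵐ ω ∂μ, 0 ≤ V n ω := by
    intro n
    have h := ae_all_iff.2 hσnn
    filter_upwards [h] with ω hω
    exact Finset.sum_nonneg fun t _ => hω t
  have hSle : ∀ n ω, S n ω ≤ n * R := by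
    intro n ω
    calc S n ω ≤ ∑ _t ∈ Finset.Icc 1 n, R := Finset.sum_le_sum fun t _ => hbdd t ω
      _ = n * R := by rw [Finset.sum_const, Nat.card_Icc]; simp [nsmul_eq_mul]
  have hSmeas : ∀ n, StronglyMeasurable[ℱ n] (S n) := by
    intro n
    apply Finset.stronglyMeasurable_fun_sum
    intro t ht
    exact (hadapt t).mono (ℱ.mono (Finset.mem_Icc.1 ht).2)
  have hVmeas : ∀ n, StronglyMeasurable[ℱ n] (V n) := by
    intro n
    apply Finset.stronglyMeasurable_fun_sum
    intro t ht
    have ht' : t ≤ n := (Finset.mem_Icc.1 ht).2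
    exact stronglyMeasurable_condExp.mono (ℱ.mono (by omega))
  have hMmeas : ∀ n, StronglyMeasurable[ℱ n] (M n) := fun n =>
    Real.continuous_exp.comp_stronglyMeasurable
      (((hSmeas n).const_mul l).sub ((hVmeas n).const_mul (c * l ^ 2)))
  have hMbd : ∀ n, ∀ᵐ ω ∂μ, M n ω ≤ Real.exp (l * (n * R)) := by
    intro n
    filter_upwards [hVnn n] with ω hV0
    apply Real.exp_le_exp.2
    have h1 := hSle n ω
    have h2 : l * S n ω ≤ l * (n * R) := mul_le_mul_of_nonneg_left h1 hl.le
    have h3 : 0 ≤ c * l ^ 2 * V n ω := mul_nonneg (by positivity) hV0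
    linarith
  have hMint : ∀ n, Integrable (M n) μ := by
    intro n
    refine Integrable.mono' (integrable_const (Real.exp (l * (n * R))))
      (((hMmeas n).mono (ℱ.le n)).aestronglyMeasurable) ?_
    filter_upwards [hMbd n] with ω h
    rw [Real.norm_eq_abs, Real.abs_exp]
    exact h
  intro n hn
  induction n with
  | zero =>
      constructor
      · simpa using hMint 0
      · simp [hSdef, hVdef]
  | succ n ih =>
      obtain ⟨-, ihle⟩ := ih (le_trans (Nat.le_succ n) hn)
      refine ⟨hMint (n + 1), ?_⟩
      -- decomposition
      have hsplit : ∀ ω, M (n + 1) ω =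
          (M n ω * Real.exp (-(c * l ^ 2) * σ (n + 1) ω)) * Real.exp (l * X (n + 1) ω) := by
        intro ω
        rw [hMdef]
        simp only [hSdef, hVdef]
        rw [Finset.sum_Icc_succ_top (Nat.succ_le_succ (Nat.zero_le n)),
          Finset.sum_Icc_succ_top (Nat.succ_le_succ (Nat.zero_le n)),
          ← Real.exp_add, ← Real.exp_add]
        ring_nf
      set G : Ω → ℝ := fun ω => M n ω * Real.exp (-(c * l ^ 2) * σ (n + 1) ω) with hGdef
      set f : Ω → ℝ := fun ω => Real.exp (l * X (n + 1) ω) with hfdef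
      have hGmeas : StronglyMeasurable[ℱ n] G :=
        (hMmeas n).mul (Real.continuous_exp.comp_stronglyMeasurable
          ((stronglyMeasurable_condExp (m := ℱ n)).const_mul _))
      have hGnn : ∀ ω, 0 ≤ G ω :=
        fun ω => mul_nonneg (Real.exp_pos _).le (Real.exp_pos _).le
      have hGbd : ∀ᵐ ω ∂μ, G ω ≤ Real.exp (l * (n * R)) := by
        filter_upwards [hMbd n, hσnn (n + 1)] with ω h1 h2
        have h3 : Real.exp (-(c * l ^ 2) * σ (n + 1) ω) ≤ 1 := by
          rw [← Real.exp_zero]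
          apply Real.exp_le_exp.2
          have : 0 ≤ c * l ^ 2 * σ (n + 1) ω := mul_nonneg (by positivity) h2
          linarith
        calc G ω = M n ω * Real.exp (-(c * l ^ 2) * σ (n + 1) ω) := rfl
          _ ≤ Real.exp (l * (n * R)) * 1 :=
              mul_le_mul h1 h3 (Real.exp_pos _).le (Real.exp_pos _).le
          _ = Real.exp (l * (n * R)) := mul_one _
      have hfmeas : StronglyMeasurable f :=
        Real.continuous_exp.comp_stronglyMeasurable
          (((hadapt (n + 1)).mono (ℱ.le _)).const_mul l)
      have hfbd : ∀ ω, f ω ≤ Real.exp 1 := fun ω => Real.exp_le_exp.2 (hlR (n + 1) ω)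
      have hfint : Integrable f μ := by
        refine Integrable.mono' (integrable_const (Real.exp 1)) hfmeas.aestronglyMeasurable ?_
        refine ae_of_all _ fun ω => ?_
        rw [Real.norm_eq_abs, Real.abs_exp]
        exact hfbd ω
      have hGfint : Integrable (G * f) μ := by
        refine Integrable.mono' (integrable_const (Real.exp (l * (n * R)) * Real.exp 1))
          ((hGmeas.mono (ℱ.le n)).mul hfmeas).aestronglyMeasurable ?_
        filter_upwards [hGbd] with ω h1
        rw [Pi.mul_apply, Real.norm_eq_abs, abs_of_nonneg (mul_nonneg (hGnn ω) (Real.exp_pos _).le)]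
        exact mul_le_mul h1 (hfbd ω) (Real.exp_pos _).le (Real.exp_pos _).le
      -- conditional expectation bound on f
      have hptw : ∀ ω, f ω ≤ 1 + l * X (n + 1) ω + c * l ^ 2 * X (n + 1) ω ^ 2 := by
        intro ω
        have h := hquad (l * X (n + 1) ω) (hlR (n + 1) ω)
        calc f ω ≤ 1 + l * X (n + 1) ω + c * (l * X (n + 1) ω) ^ 2 := h
          _ = 1 + l * X (n + 1) ω + c * l ^ 2 * X (n + 1) ω ^ 2 := by ring
      have hgint : Integrable (fun ω => 1 + l * X (n + 1) ω + c * l ^ 2 * X (n + 1) ω ^ 2) μ :=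
        ((integrable_const 1).add ((hint (n + 1)).const_mul l)).add
          ((hint2 (n + 1)).const_mul (c * l ^ 2))
      have hmds' : μ[X (n + 1)|ℱ n] =ᵐ[μ] 0 := hmds (n + 1) (Nat.succ_le_succ (Nat.zero_le n)) hn
      have hcondg : μ[fun ω => 1 + l * X (n + 1) ω + c * l ^ 2 * X (n + 1) ω ^ 2|ℱ n]
          =ᵐ[μ] fun ω => 1 + l * (μ[X (n + 1)|ℱ n]) ω + c * l ^ 2 * σ (n + 1) ω := by
        have e1 : μ[fun ω => 1 + l * X (n + 1) ω + c * l ^ 2 * X (n + 1) ω ^ 2|ℱ n]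
            =ᵐ[μ] μ[fun ω => 1 + l * X (n + 1) ω|ℱ n]
              + μ[fun ω => c * l ^ 2 * X (n + 1) ω ^ 2|ℱ n] :=
          condExp_add ((integrable_const 1).add ((hint (n + 1)).const_mul l))
            ((hint2 (n + 1)).const_mul (c * l ^ 2)) _
        have e2 : μ[fun ω => 1 + l * X (n + 1) ω|ℱ n]
            =ᵐ[μ] μ[fun _ => (1 : ℝ)|ℱ n] + μ[fun ω => l * X (n + 1) ω|ℱ n] :=
          condExp_add (integrable_const 1) ((hint (n + 1)).const_mul l) _
        have e3 : μ[fun ω => l * X (n + 1) ω|ℱ n] =ᵐ[μ] l • μ[X (n + 1)|ℱ n] :=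
          condExp_smul l (X (n + 1)) _
        have e4 : μ[fun ω => c * l ^ 2 * X (n + 1) ω ^ 2|ℱ n]
            =ᵐ[μ] (c * l ^ 2) • μ[fun ω => X (n + 1) ω ^ 2|ℱ n] :=
          condExp_smul (c * l ^ 2) (fun ω => X (n + 1) ω ^ 2) _
        have e5 : μ[fun _ => (1 : ℝ)|ℱ n] = fun _ => (1 : ℝ) := condExp_const (ℱ.le n) 1
        filter_upwards [e1, e2, e3, e4] with ω h1 h2 h3 h4
        rw [h1, Pi.add_apply, h2, Pi.add_apply, h3, h4, e5]
        simp only [Pi.smul_apply, smul_eq_mul, hσdef, Nat.add_sub_cancel]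
      have hcondfle : μ[f|ℱ n] ≤ᵐ[μ] fun ω => 1 + c * l ^ 2 * σ (n + 1) ω := by
        have h1 := condExp_mono hfint hgint (ae_of_all _ hptw) (m := ℱ n)
        filter_upwards [h1, hcondg, hmds'] with ω ha hb hc'
        rw [hb] at ha
        simp only [Pi.zero_apply] at hc'
        rw [hc'] at ha
        linarith
      have hcondfnn : 0 ≤ᵐ[μ] μ[f|ℱ n] :=
        condExp_nonneg (ae_of_all _ fun ω => (Real.exp_pos _).le)
      -- pull-out
      have hpull : μ[G * f|ℱ n] =ᵐ[μ] G * μ[f|ℱ n] :=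
        condExp_mul_of_stronglyMeasurable_left hGmeas hGfint hfint
      have hint_Gcf : Integrable (G * μ[f|ℱ n]) μ :=
        (integrable_condExp (f := G * f)).congr hpull
      have hint_G1 : Integrable (fun ω => G ω * (1 + c * l ^ 2 * σ (n + 1) ω)) μ := by
        refine Integrable.mono' (integrable_const (Real.exp (l * (n * R))))
          (((hGmeas.mono (ℱ.le n)).mul
            ((stronglyMeasurable_const.add
              ((stronglyMeasurable_condExp.mono (ℱ.le n)).const_mul
                (c * l ^ 2)))) ).aestronglyMeasurable) ?_
        filter_upwards [hMbd n, hσnn (n + 1)] with ω h1 h2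
        have hu : 0 ≤ c * l ^ 2 * σ (n + 1) ω := mul_nonneg (by positivity) h2
        have key : Real.exp (-(c * l ^ 2) * σ (n + 1) ω) * (1 + c * l ^ 2 * σ (n + 1) ω) ≤ 1 := by
          have h3 : 1 + c * l ^ 2 * σ (n + 1) ω ≤ Real.exp (c * l ^ 2 * σ (n + 1) ω) := by
            have := Real.add_one_le_exp (c * l ^ 2 * σ (n + 1) ω)
            linarith
          calc Real.exp (-(c * l ^ 2) * σ (n + 1) ω) * (1 + c * l ^ 2 * σ (n + 1) ω)
              ≤ Real.exp (-(c * l ^ 2) * σ (n + 1) ω) * Real.exp (c * l ^ 2 * σ (n + 1) ω) := by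
                apply mul_le_mul_of_nonneg_left h3 (Real.exp_pos _).le
            _ = 1 := by rw [← Real.exp_add]; ring_nf; exact Real.exp_zero
        rw [Real.norm_eq_abs, hGdef, abs_of_nonneg (by positivity : (0:ℝ) ≤ M n ω * Real.exp (-(c * l ^ 2) * σ (n + 1) ω) * (1 + c * l ^ 2 * σ (n + 1) ω))]
        calc M n ω * Real.exp (-(c * l ^ 2) * σ (n + 1) ω) * (1 + c * l ^ 2 * σ (n + 1) ω)
            = M n ω * (Real.exp (-(c * l ^ 2) * σ (n + 1) ω) * (1 + c * l ^ 2 * σ (n + 1) ω)) := by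
              ring
          _ ≤ M n ω * 1 := mul_le_mul_of_nonneg_left key (Real.exp_pos _).le
          _ ≤ Real.exp (l * (n * R)) := by rw [mul_one]; exact h1
      calc ∫ ω, M (n + 1) ω ∂μ = ∫ ω, (G * f) ω ∂μ := by
            apply integral_congr_ae
            exact ae_of_all _ fun ω => hsplit ω
        _ = ∫ ω, (μ[G * f|ℱ n]) ω ∂μ := (integral_condExp (f := G * f) (ℱ.le n)).symm
        _ = ∫ ω, (G * μ[f|ℱ n]) ω ∂μ := integral_congr_ae hpull
        _ ≤ ∫ ω, G ω * (1 + c * l ^ 2 * σ (n + 1) ω) ∂μ := by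
            apply integral_mono_ae hint_Gcf hint_G1
            filter_upwards [hcondfle] with ω h
            exact mul_le_mul_of_nonneg_left h (hGnn ω)
        _ ≤ ∫ ω, M n ω ∂μ := by
            apply integral_mono_ae hint_G1 (hMint n)
            filter_upwards [hσnn (n + 1)] with ω h2
            have key : Real.exp (-(c * l ^ 2) * σ (n + 1) ω) * (1 + c * l ^ 2 * σ (n + 1) ω) ≤ 1 := by
              have h3 : 1 + c * l ^ 2 * σ (n + 1) ω ≤ Real.exp (c * l ^ 2 * σ (n + 1) ω) := by
                have := Real.add_one_le_exp (c * l ^ 2 * σ (n + 1) ω)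
                linarith
              calc Real.exp (-(c * l ^ 2) * σ (n + 1) ω) * (1 + c * l ^ 2 * σ (n + 1) ω)
                  ≤ Real.exp (-(c * l ^ 2) * σ (n + 1) ω) * Real.exp (c * l ^ 2 * σ (n + 1) ω) :=
                    mul_le_mul_of_nonneg_left h3 (Real.exp_pos _).le
                _ = 1 := by rw [← Real.exp_add]; ring_nf; exact Real.exp_zero
            calc G ω * (1 + c * l ^ 2 * σ (n + 1) ω)
                = M n ω * (Real.exp (-(c * l ^ 2) * σ (n + 1) ω) * (1 + c * l ^ 2 * σ (n + 1) ω)) := by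
                  rw [hGdef]; ring
              _ ≤ M n ω * 1 := mul_le_mul_of_nonneg_left key (Real.exp_pos _).le
              _ = M n ω := mul_one _
        _ ≤ 1 := ihle

theorem stmt_1 {Ω : Type*} {m0 : MeasurableSpace Ω} {μ : Measure Ω} [IsProbabilityMeasure μ]
    (ℱ : Filtration ℕ m0) (T : ℕ) (X : ℕ → Ω → ℝ) (R : ℝ) (hR : 0 < R)
    (hadapt : ∀ t, StronglyMeasurable[ℱ t] (X t))
    (hbdd : ∀ t ω, X t ω ≤ R)
    (hint : ∀ t, Integrable (X t) μ)
    (hint2 : ∀ t, Integrable (fun ω => X t ω ^ 2) μ)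
    (hmds : ∀ t, 1 ≤ t → t ≤ T → μ[X t|ℱ (t - 1)] =ᵐ[μ] 0)
    (δ : ℝ) (hδ : 0 < δ) (V' : ℝ)
    (hV' : R ^ 2 * Real.log (1 / δ) / (Real.exp 1 - 2) ≤ V') :
    ENNReal.ofReal (1 - δ) ≤
      μ {ω | ∑ t ∈ Finset.Icc 1 T, X t ω ≤
        Real.sqrt ((Real.exp 1 - 2) * Real.log (1 / δ)) *
          ((∑ t ∈ Finset.Icc 1 T, (μ[fun ω' => X t ω' ^ 2|ℱ (t - 1)]) ω) / Real.sqrt V'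
            + Real.sqrt V')} := by
  rcases le_or_gt 1 δ with hδ1 | hδ1
  · have h0 : ENNReal.ofReal (1 - δ) = 0 := by
      rw [ENNReal.ofReal_eq_zero]; linarith
    rw [h0]; exact zero_le
  -- nontrivial case
  have hc : 0 < Real.exp 1 - 2 := by
    have := Real.exp_one_gt_d9; nlinarith
  set c : ℝ := Real.exp 1 - 2 with hcdef
  set L : ℝ := Real.log (1 / δ) with hLdef
  have hLpos : 0 < L := Real.log_pos (by rw [lt_div_iff₀ hδ]; linarith)
  have hV'pos : 0 < V' := lt_of_lt_of_le (by positivity) hV'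
  set l : ℝ := Real.sqrt (L / (c * V')) with hldef
  have hlpos : 0 < l := Real.sqrt_pos.2 (by positivity)
  have hlsq : l ^ 2 = L / (c * V') := Real.sq_sqrt (by positivity)
  have hlR : l * R ≤ 1 := by
    have h1 : (l * R) ^ 2 ≤ 1 := by
      have : (l * R) ^ 2 = R ^ 2 * L / (c * V') := by rw [mul_pow, hlsq]; ring
      rw [this, div_le_one (by positivity)]
      calc R ^ 2 * L = (R ^ 2 * L / c) * c := by field_simp
        _ ≤ V' * c := by gcongr
        _ = c * V' := mul_comm _ _
    nlinarith [mul_pos hlpos hR]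
  have hlX : ∀ t ω, l * X t ω ≤ 1 := fun t ω =>
    le_trans (mul_le_mul_of_nonneg_left (hbdd t ω) hlpos.le) hlR
  have hquad : ∀ x : ℝ, x ≤ 1 → Real.exp x ≤ 1 + x + c * x ^ 2 := fun x hx => exp_quad hx
  obtain ⟨hMTint, hMTle⟩ := integral_exp_le ℱ T X R c l hc hlpos hadapt hbdd hint hint2 hmds
    hquad hlX T le_rfl
  set M : Ω → ℝ := fun ω => Real.exp (l * ∑ t ∈ Finset.Icc 1 T, X t ω
      - c * l ^ 2 * ∑ t ∈ Finset.Icc 1 T, (μ[fun ω' => X t ω' ^ 2|ℱ (t - 1)]) ω) with hMdef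
  set A : Set Ω := ({ω | 1 / δ ≤ M ω} : Set Ω) with hAdef
  have hAmeas : MeasurableSet A := by
    have hMmeas : Measurable M := by
      apply Measurable.exp
      apply Measurable.sub
      · exact (Finset.measurable_sum _ fun t _ =>
          ((hadapt t).mono (ℱ.le t)).measurable).const_mul l
      · exact (Finset.measurable_sum _ fun t _ =>
          (stronglyMeasurable_condExp.mono (ℱ.le (t - 1))).measurable).const_mul _
    exact measurableSet_le measurable_const hMmeas
  have hMark : μ A ≤ ENNReal.ofReal δ := by
    have h1 := mul_meas_ge_le_integral_of_nonneg
      (ae_of_all μ fun ω => (Real.exp_pos _).le) hMTint (1 / δ)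
    have h2 : (1 / δ) * (μ A).toReal ≤ 1 := le_trans h1 hMTle
    have h3 : (μ A).toReal ≤ δ := by
      rw [div_mul_eq_mul_div, one_mul, div_le_one hδ] at h2
      exact h2
    exact (ENNReal.le_ofReal_iff_toReal_le (measure_ne_top μ A) hδ.le).2 h3
  have hsub : Aᶜ ⊆ {ω | ∑ t ∈ Finset.Icc 1 T, X t ω ≤
      Real.sqrt (c * L) *
        ((∑ t ∈ Finset.Icc 1 T, (μ[fun ω' => X t ω' ^ 2|ℱ (t - 1)]) ω) / Real.sqrt V'
          + Real.sqrt V')} := by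
    intro ω hω
    simp only [Set.mem_compl_iff, hAdef, Set.mem_setOf_eq, not_le] at hω
    simp only [Set.mem_setOf_eq]
    set Sw : ℝ := ∑ t ∈ Finset.Icc 1 T, X t ω with hSw
    set Vw : ℝ := ∑ t ∈ Finset.Icc 1 T, (μ[fun ω' => X t ω' ^ 2|ℱ (t - 1)]) ω with hVw
    have hδinv : Real.exp L = 1 / δ := Real.exp_log (by positivity)
    have hlt : l * Sw - c * l ^ 2 * Vw < L := by
      by_contra h
      push_neg at h
      have : (1:ℝ) / δ ≤ M ω := by
        rw [← hδinv]
        exact Real.exp_le_exp.2 h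
      linarith
    -- key identities
    have hsq : Real.sqrt V' * Real.sqrt V' = V' := Real.mul_self_sqrt hV'pos.le
    have hsqpos : 0 < Real.sqrt V' := Real.sqrt_pos.2 hV'pos
    have hid1 : Real.sqrt (c * L) * l = L / Real.sqrt V' := by
      rw [hldef, ← Real.sqrt_mul (by positivity)]
      have h5 : c * L * (L / (c * V')) = (L / Real.sqrt V') ^ 2 := by
        rw [div_pow, Real.sq_sqrt hV'pos.le]
        field_simp
      rw [h5, Real.sqrt_sq (by positivity)]
    have hcl2 : c * l ^ 2 = L / V' := by
      rw [hlsq]; field_simp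
    have hkey : l * (Real.sqrt (c * L) * (Vw / Real.sqrt V' + Real.sqrt V'))
        = L / V' * Vw + L := by
      have : l * (Real.sqrt (c * L) * (Vw / Real.sqrt V' + Real.sqrt V'))
          = (Real.sqrt (c * L) * l) * (Vw / Real.sqrt V') + (Real.sqrt (c * L) * l) * Real.sqrt V' := by
        ring
      rw [this, hid1]
      rw [div_mul_div_comm, hsq, div_mul_cancel₀ _ hsqpos.ne']
      ring
    have hfin : l * Sw ≤ l * (Real.sqrt (c * L) * (Vw / Real.sqrt V' + Real.sqrt V')) := by
      rw [hkey]
      have h6 : c * l ^ 2 * Vw = L / V' * Vw := by rw [hcl2]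
      rw [← h6]
      linarith
    exact le_of_mul_le_mul_left hfin hlpos
  calc ENNReal.ofReal (1 - δ) = 1 - ENNReal.ofReal δ := by
        rw [← ENNReal.ofReal_one, ← ENNReal.ofReal_sub _ hδ.le]
    _ ≤ 1 - μ A := tsub_le_tsub_left hMark 1
    _ = μ Aᶜ := (prob_compl_eq_one_sub hAmeas).symm
    _ ≤ _ := measure_mono hsub
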